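/- Let R : X → PMF Y be an ε-differentially-private local randomizer on finite types X, Y, i.e., Pr[R(x)=y] ≤ e^ε · Pr[R(x')=y] for all x, x', y. Then for each fixed x₁, there exists for every x ∈ X a probability mass function LO(x) on Y such that R(x) = e^{-ε}·R(x₁) + (1 − e^{-ε})·LO(x) as a convex mixture of distributions. -/

import Mathlib

open scoped BigOperators

/-- Clone decomposition: an `ε`-DP local randomizer `R` can be written, for any
fixed reference input `x₁`, as the mixture
`R x = e^{-ε} · R x₁ + (1 − e^{-ε}) · LO x` where each `LO x` is a
probability mass function. -/
theorem stmt15 {X Y : Type*} [Fintype X] [Fintype Y] (ε : ℝ) (hε : 0 < ε)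
    (R : X → Y → ℝ)
    (hR0 : ∀ x y, 0 ≤ R x y) (hR1 : ∀ x, ∑ y, R x y = 1)
    (hDP : ∀ x x' y, R x y ≤ Real.exp ε * R x' y)
    (x₁ : X) :
    ∃ LO : X → Y → ℝ,
      (∀ x, (∀ y, 0 ≤ LO x y) ∧ ∑ y, LO x y = 1) ∧
      (∀ x y, R x y = Real.exp (-ε) * R x₁ y + (1 - Real.exp (-ε)) * LO x y) := by
  have hlt : Real.exp (-ε) < 1 := Real.exp_lt_one_iff.mpr (by linarith)
  have hden : (0:ℝ) < 1 - Real.exp (-ε) := by linarith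
  refine ⟨fun x y => (R x y - Real.exp (-ε) * R x₁ y) / (1 - Real.exp (-ε)), ?_, ?_⟩
  · intro x
    constructor
    · intro y
      apply div_nonneg _ hden.le
      have h := hDP x₁ x y
      have : Real.exp (-ε) * R x₁ y ≤ R x y := by
        have hexp : Real.exp (-ε) * Real.exp ε = 1 := by
          rw [← Real.exp_add]; simp
        calc Real.exp (-ε) * R x₁ y
            ≤ Real.exp (-ε) * (Real.exp ε * R x y) :=
              mul_le_mul_of_nonneg_left h (Real.exp_pos _).le
          _ = R x y := by rw [← mul_assoc, hexp, one_mul]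
      linarith
    · rw [← Finset.sum_div]
      rw [Finset.sum_sub_distrib, ← Finset.mul_sum, hR1, hR1]
      field_simp
  · intro x y
    field_simp
    ring
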